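/- Let w ∈ ℝ^n be a τ-regular vector with Σ_i |w^{(i)}|² = 1, let γ ∈ (0,1], and let z_1,…,z_n be i.i.d. {0,1}-valued random variables with Pr[z_i = 1] = γ. Then Pr[ Σ_{i=1}^{n} (w^{(i)})²·z_i ≥ γ/2 ] ≥ 1 − 2·e^{−γ²/(2τ²)}. -/

import Mathlib

open MeasureTheory
open scoped ENNReal

noncomputable section

/-- The real value (0 or 1) of a bit. -/
def bval (b : Bool) : ℝ := if b then 1 else 0

/-- The distribution of a biased coin on `Bool` with probability `p` of `true`. -/
def coin (p : ℝ) : Measure Bool :=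
  (PMF.bernoulli (min (Real.toNNReal p) 1) (min_le_right _ _)).toMeasure

lemma hoeffding_bernoulli {p : ℝ} (hp0 : 0 ≤ p) (hp1 : p ≤ 1) (s : ℝ) :
    1 - p + p * Real.exp s ≤ Real.exp (p * s + s ^ 2 / 8) := by
  set D : ℝ → ℝ := fun s => 1 - p + p * Real.exp s with hDdef
  have hDpos : ∀ s, 0 < D s := by
    intro s
    rcases eq_or_lt_of_le hp0 with h | h
    · simp [D, ← h]
    · have := Real.exp_pos s; simp only [D]; nlinarith
  set F : ℝ → ℝ := fun s => p * s + s ^ 2 / 8 - Real.log (D s) with hFdef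
  set F' : ℝ → ℝ := fun s => p + s / 4 - p * Real.exp s / D s with hF'def
  have hDderiv : ∀ s, HasDerivAt D (p * Real.exp s) s := by
    intro s
    exact ((Real.hasDerivAt_exp s).const_mul p).const_add (1 - p)
  have hderiv : ∀ s, HasDerivAt F (F' s) s := by
    intro s
    have h2 : HasDerivAt (fun s => Real.log (D s)) (p * Real.exp s / D s) s :=
      (hDderiv s).log (hDpos s).ne'
    have h3 : HasDerivAt (fun s : ℝ => p * s + s ^ 2 / 8) (p + s / 4) s := by
      have h4 : HasDerivAt (fun s : ℝ => s ^ 2) (2 * s) s := by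
        simpa using hasDerivAt_pow 2 s
      have := ((hasDerivAt_id s).const_mul p).add (h4.div_const 8)
      exact this.congr_deriv (by ring)
    exact h3.sub h2
  have hderiv' : ∀ s, HasDerivAt F' (1 / 4 - p * Real.exp s * (1 - p) / (D s) ^ 2) s := by
    intro s
    have hq : HasDerivAt (fun s => p * Real.exp s / D s)
        ((p * Real.exp s * D s - p * Real.exp s * (p * Real.exp s)) / (D s) ^ 2) s :=
      ((Real.hasDerivAt_exp s).const_mul p).div (hDderiv s) (hDpos s).ne'
    have h3 : HasDerivAt (fun s : ℝ => p + s / 4) (1 / 4) s := by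
      simpa using ((hasDerivAt_id s).div_const 4).const_add p
    have := h3.sub hq
    refine this.congr_deriv ?_
    have : D s = 1 - p + p * Real.exp s := rfl
    rw [this]
    ring
  have hF''nonneg : ∀ s, 0 ≤ 1 / 4 - p * Real.exp s * (1 - p) / (D s) ^ 2 := by
    intro s
    have hD := hDpos s
    have hDe : D s = 1 - p + p * Real.exp s := rfl
    rw [sub_nonneg, div_le_iff₀ (by positivity)]
    nlinarith [sq_nonneg (1 - p - p * Real.exp s), Real.exp_pos s]
  have hF'mono : Monotone F' := by
    refine monotone_of_deriv_nonneg (fun s => (hderiv' s).differentiableAt) ?_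
    intro x
    rw [(hderiv' x).deriv]
    exact hF''nonneg x
  have hF'0 : F' 0 = 0 := by
    have : D 0 = 1 := by simp [D]
    simp [F', this]
  have hFdiff : Differentiable ℝ F := fun s => (hderiv s).differentiableAt
  have hF0 : F 0 = 0 := by
    have : D 0 = 1 := by simp [D]
    simp [F, this]
  have key : 0 ≤ F s := by
    rcases le_total 0 s with hs | hs
    · have hmono : MonotoneOn F (Set.Ici 0) := by
        refine monotoneOn_of_deriv_nonneg (convex_Ici 0) hFdiff.continuous.continuousOn
          (hFdiff.differentiableOn) ?_
        intro x hx
        rw [(hderiv x).deriv]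
        rw [interior_Ici] at hx
        calc (0:ℝ) = F' 0 := hF'0.symm
          _ ≤ F' x := hF'mono (le_of_lt hx)
      have := hmono (Set.self_mem_Ici) (Set.mem_Ici.mpr hs) hs
      rwa [hF0] at this
    · have hanti : AntitoneOn F (Set.Iic 0) := by
        refine antitoneOn_of_deriv_nonpos (convex_Iic 0) hFdiff.continuous.continuousOn
          (hFdiff.differentiableOn) ?_
        intro x hx
        rw [(hderiv x).deriv]
        rw [interior_Iic] at hx
        calc F' x ≤ F' 0 := hF'mono (le_of_lt hx)
          _ = 0 := hF'0
      have := hanti (Set.mem_Iic.mpr hs) (Set.self_mem_Iic) hs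
      rwa [hF0] at this
  have hlog : Real.log (D s) ≤ p * s + s ^ 2 / 8 := by
    have : 0 ≤ p * s + s ^ 2 / 8 - Real.log (D s) := key
    linarith
  calc 1 - p + p * Real.exp s = D s := rfl
    _ = Real.exp (Real.log (D s)) := (Real.exp_log (hDpos s)).symm
    _ ≤ Real.exp (p * s + s ^ 2 / 8) := Real.exp_le_exp.mpr hlog


lemma coin_singleton {γ : ℝ} (hγ0 : 0 ≤ γ) (hγ1 : γ ≤ 1) (b : Bool) :
    ((coin γ) {b}).toReal = if b then γ else 1 - γ := by
  rw [coin, PMF.toMeasure_apply_singleton _ b (measurableSet_singleton b)]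
  have hmin : min (Real.toNNReal γ) 1 = Real.toNNReal γ :=
    min_eq_left (Real.toNNReal_le_one.mpr hγ1)
  cases b
  · simp only [PMF.bernoulli_apply, Bool.cond_false, hmin, if_false]
    rw [ENNReal.coe_toReal, NNReal.coe_sub (Real.toNNReal_le_one.mpr hγ1),
      Real.coe_toNNReal _ hγ0]
    simp
  · simp [hmin, PMF.bernoulli_apply, Real.coe_toNNReal _ hγ0]

instance coin_prob (γ : ℝ) : IsProbabilityMeasure (coin γ) :=
  PMF.toMeasure.isProbabilityMeasure _

lemma coin_integral {γ : ℝ} (hγ0 : 0 ≤ γ) (hγ1 : γ ≤ 1) (f : Bool → ℝ) :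
    ∫ b, f b ∂(coin γ) = (1 - γ) * f false + γ * f true := by
  rw [integral_fintype (Integrable.of_finite)]
  rw [Fintype.sum_bool]
  rw [measureReal_def, measureReal_def]
  rw [coin_singleton hγ0 hγ1, coin_singleton hγ0 hγ1]
  simp [mul_comm]
  ring

lemma pi_coin_exp_integral {n : ℕ} {γ : ℝ} (hγ0 : 0 ≤ γ) (hγ1 : γ ≤ 1)
    (a : Fin n → ℝ) (t : ℝ) :
    ∫ z, Real.exp (t * ∑ i, a i * bval (z i)) ∂(Measure.pi fun _ : Fin n => coin γ) =
      ∏ i, ((1 - γ) + γ * Real.exp (t * a i)) := by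
  letI : MeasureSpace Bool := ⟨coin γ⟩
  haveI : IsProbabilityMeasure (volume : Measure Bool) := coin_prob γ
  haveI : SigmaFinite (volume : Measure Bool) := inferInstance
  have hvol : (Measure.pi fun _ : Fin n => coin γ) = (volume : Measure (Fin n → Bool)) := rfl
  rw [hvol]
  calc ∫ z : Fin n → Bool, Real.exp (t * ∑ i, a i * bval (z i))
      = ∫ z : Fin n → Bool, ∏ i, Real.exp (t * (a i * bval (z i))) := by
        congr 1; ext z; rw [← Real.exp_sum, Finset.mul_sum]
    _ = ∏ i, ∫ b : Bool, Real.exp (t * (a i * bval b)) :=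
        integral_fintype_prod_eq_prod (fun i b => Real.exp (t * (a i * bval b)))
    _ = ∏ i, ((1 - γ) + γ * Real.exp (t * a i)) := by
        refine Finset.prod_congr rfl fun i _ => ?_
        rw [show (∫ b : Bool, Real.exp (t * (a i * bval b)))
            = ∫ b, (fun b => Real.exp (t * (a i * bval b))) b ∂(coin γ) from rfl,
          coin_integral hγ0 hγ1]
        simp [bval]

/-- for a `τ`-regular unit vector `w` and i.i.d. Bernoulli(`γ`) bits
`z₁,…,z_n`, with probability at least `1 − 2e^{−γ²/(2τ²)}` the random quantity
`Σᵢ (wⁱ)² zᵢ` is at least `γ/2`. -/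
theorem stmt_17 (n : ℕ) (τ γ : ℝ) (hγ0 : 0 < γ) (hγ1 : γ ≤ 1)
    (w : Fin n → ℝ)
    (hreg : ∀ i, |w i| ≤ τ * Real.sqrt (∑ j, (w j) ^ 2))
    (hnorm : ∑ i, (w i) ^ 2 = 1) :
    1 - 2 * Real.exp (-(γ ^ 2) / (2 * τ ^ 2)) ≤
      ((Measure.pi fun _ : Fin n => coin γ)
        {z | γ / 2 ≤ ∑ i, (w i) ^ 2 * bval (z i)}).toReal := by
  classical
  set μ := Measure.pi fun _ : Fin n => coin γ with hμ
  haveI : IsProbabilityMeasure μ := by rw [hμ]; infer_instance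
  have hτa : ∀ i, (w i) ^ 2 ≤ τ ^ 2 := by
    intro i
    have h := hreg i
    rw [hnorm, Real.sqrt_one, mul_one] at h
    nlinarith [abs_nonneg (w i), sq_abs (w i)]
  have hτ : 0 < τ := by
    obtain ⟨i, hi⟩ : ∃ i, w i ≠ 0 := by
      by_contra h
      push_neg at h
      rw [Finset.sum_eq_zero (fun i _ => by rw [h i]; ring)] at hnorm
      norm_num at hnorm
    have h := hreg i
    rw [hnorm, Real.sqrt_one, mul_one] at h
    have := abs_pos.mpr hi
    linarith
  set t : ℝ := -(2 * γ / τ ^ 2) with htdef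
  have ht : t ≤ 0 := by
    have : 0 < 2 * γ / τ ^ 2 := by positivity
    simp only [htdef]; linarith
  clear_value t
  set X : (Fin n → Bool) → ℝ := fun z => ∑ i, (w i) ^ 2 * bval (z i) with hXdef
  have hcher := ProbabilityTheory.measure_le_le_exp_mul_mgf (μ := μ) (X := X)
    (γ / 2) ht (Integrable.of_finite)
  have hmgf : ProbabilityTheory.mgf X μ t
      = ∏ i, ((1 - γ) + γ * Real.exp (t * (w i) ^ 2)) := by
    have h0 : ProbabilityTheory.mgf X μ t = ∫ z, Real.exp (t * X z) ∂μ := rfl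
    rw [h0, hμ]
    exact pi_coin_exp_integral hγ0.le hγ1 _ t
  have hb : ∏ i, ((1 - γ) + γ * Real.exp (t * (w i) ^ 2))
      ≤ Real.exp (γ * t + t ^ 2 * τ ^ 2 / 8) := by
    have hsum_le : ∑ i, (γ * (t * (w i) ^ 2) + (t * (w i) ^ 2) ^ 2 / 8)
        ≤ γ * t + t ^ 2 * τ ^ 2 / 8 := by
      rw [Finset.sum_add_distrib]
      have h1 : ∑ i, γ * (t * (w i) ^ 2) = γ * t := by
        simp_rw [← mul_assoc]
        rw [← Finset.mul_sum, hnorm, mul_one]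
      have h2 : ∑ i, (t * (w i) ^ 2) ^ 2 / 8 ≤ t ^ 2 * τ ^ 2 / 8 := by
        have hle : ∀ i ∈ Finset.univ, (t * (w i) ^ 2) ^ 2 / 8
            ≤ (t ^ 2 * τ ^ 2 / 8) * (w i) ^ 2 := by
          intro i _
          nlinarith [mul_nonneg (mul_nonneg (sq_nonneg t) (sq_nonneg ((w i) ^ 2)))
            (sub_nonneg.mpr (hτa i)), sq_nonneg (w i),
            mul_nonneg (mul_nonneg (sq_nonneg t) (sq_nonneg (w i)))
            (sub_nonneg.mpr (hτa i))]
        calc ∑ i, (t * (w i) ^ 2) ^ 2 / 8 ≤ ∑ i, (t ^ 2 * τ ^ 2 / 8) * (w i) ^ 2 :=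
              Finset.sum_le_sum hle
          _ = t ^ 2 * τ ^ 2 / 8 := by rw [← Finset.mul_sum, hnorm, mul_one]
      linarith [h1, h2]
    calc ∏ i, ((1 - γ) + γ * Real.exp (t * (w i) ^ 2))
        ≤ ∏ i, Real.exp (γ * (t * (w i) ^ 2) + (t * (w i) ^ 2) ^ 2 / 8) := by
          refine Finset.prod_le_prod (fun i _ => ?_) (fun i _ => ?_)
          · have := Real.exp_pos (t * (w i) ^ 2); nlinarith
          · exact hoeffding_bernoulli hγ0.le hγ1 _
      _ = Real.exp (∑ i, (γ * (t * (w i) ^ 2) + (t * (w i) ^ 2) ^ 2 / 8)) :=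
          (Real.exp_sum _ _).symm
      _ ≤ Real.exp (γ * t + t ^ 2 * τ ^ 2 / 8) := Real.exp_le_exp.mpr hsum_le
  have hexp_eq : -t * (γ / 2) + (γ * t + t ^ 2 * τ ^ 2 / 8) = -(γ ^ 2) / (2 * τ ^ 2) := by
    rw [htdef]
    field_simp
    ring
  have hfail : (μ {z | X z ≤ γ / 2}).toReal ≤ Real.exp (-(γ ^ 2) / (2 * τ ^ 2)) := by
    calc (μ {z | X z ≤ γ / 2}).toReal
        ≤ Real.exp (-t * (γ / 2)) * ProbabilityTheory.mgf X μ t := hcher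
      _ ≤ Real.exp (-t * (γ / 2)) * Real.exp (γ * t + t ^ 2 * τ ^ 2 / 8) := by
          rw [hmgf]
          exact mul_le_mul_of_nonneg_left hb (Real.exp_pos _).le
      _ = Real.exp (-t * (γ / 2) + (γ * t + t ^ 2 * τ ^ 2 / 8)) := (Real.exp_add _ _).symm
      _ = Real.exp (-(γ ^ 2) / (2 * τ ^ 2)) := by rw [hexp_eq]
  set S : Set (Fin n → Bool) := {z | γ / 2 ≤ X z} with hSdef
  have hSm : MeasurableSet S := (Set.toFinite S).measurableSet
  have hsub : Sᶜ ⊆ {z | X z ≤ γ / 2} := by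
    intro z hz
    simp only [hSdef, Set.mem_compl_iff, Set.mem_setOf_eq, not_le] at hz ⊢
    exact hz.le
  have h1 : (μ Sᶜ).toReal ≤ Real.exp (-(γ ^ 2) / (2 * τ ^ 2)) :=
    le_trans (ENNReal.toReal_mono (measure_ne_top _ _) (measure_mono hsub)) hfail
  have h2 : (μ S).toReal + (μ Sᶜ).toReal = 1 := by
    rw [← ENNReal.toReal_add (measure_ne_top _ _) (measure_ne_top _ _),
      measure_add_measure_compl hSm, measure_univ, ENNReal.toReal_one]
  have hexppos := Real.exp_pos (-(γ ^ 2) / (2 * τ ^ 2))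
  have : 1 - 2 * Real.exp (-(γ ^ 2) / (2 * τ ^ 2)) ≤ (μ S).toReal := by linarith
  exact this
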